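/- arXiv:0712.3956 — 2 statements merged into one kernel-verified Lean document; each statement's English description precedes it below -/
import Mathlib

section
/- Let G be a connected α-critical graph with at least 4 vertices, and let u be a vertex of G with exactly two neighbors v and w. Then v and w are not adjacent. -/
open SimpleGraph

variable {V : Type*}

/-- The maximum size of an independent (stable) set of a simple graph. -/
noncomputable def alpha (G : SimpleGraph V) : ℕ :=
  sSup {n | ∃ s : Finset V, (∀ x ∈ s, ∀ y ∈ s, ¬ G.Adj x y) ∧ s.card = n}

/-- A graph is α-critical if deleting any edge increases α. -/
def AlphaCritical (G : SimpleGraph V) : Prop :=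
  ∀ x y : V, G.Adj x y → alpha G < alpha (G.deleteEdges {s(x, y)})

/-- `G` contains a totally odd K₄-subdivision: four distinct branch vertices joined by
six internally disjoint paths of odd length. -/
def HasTOK4 (G : SimpleGraph V) : Prop :=
  ∃ b : Fin 4 → V, Function.Injective b ∧
  ∃ P : ∀ i j : Fin 4, G.Walk (b i) (b j),
    (∀ i j, i ≠ j → (P i j).IsPath) ∧
    (∀ i j, i ≠ j → Odd (P i j).length) ∧
    (∀ i j k l : Fin 4, i ≠ j → k ≠ l → s(i, j) ≠ s(k, l) →
      ∀ v : V, v ∈ (P i j).support → v ∈ (P k l).support →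
        (v = b i ∨ v = b j) ∧ (v = b k ∨ v = b l))

/-- `G` is (isomorphic to) a totally odd K₄-subdivision: it has one that uses all
vertices and all edges of `G`. -/
def IsTOK4 (G : SimpleGraph V) : Prop :=
  ∃ b : Fin 4 → V, Function.Injective b ∧
  ∃ P : ∀ i j : Fin 4, G.Walk (b i) (b j),
    (∀ i j, i ≠ j → (P i j).IsPath) ∧
    (∀ i j, i ≠ j → Odd (P i j).length) ∧
    (∀ i j k l : Fin 4, i ≠ j → k ≠ l → s(i, j) ≠ s(k, l) →
      ∀ v : V, v ∈ (P i j).support → v ∈ (P k l).support →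
        (v = b i ∨ v = b j) ∧ (v = b k ∨ v = b l)) ∧
    (∀ v : V, ∃ i j, i ≠ j ∧ v ∈ (P i j).support) ∧
    (∀ e ∈ G.edgeSet, ∃ i j, i ≠ j ∧ e ∈ (P i j).edges)

/-- `G` is an odd cycle: a cycle of odd length passing through all vertices
and using all edges of `G`. -/
def IsOddCycle (G : SimpleGraph V) : Prop :=
  ∃ (v : V) (w : G.Walk v v), w.IsCycle ∧ Odd w.length ∧
    (∀ u : V, u ∈ w.support) ∧ (∀ e ∈ G.edgeSet, e ∈ w.edges)

/-- `G` is isomorphic to the complete graph on one vertex. -/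
def IsK1 (G : SimpleGraph V) : Prop := Nonempty (G ≃g (⊤ : SimpleGraph (Fin 1)))

/-- `G` is isomorphic to the complete graph on two vertices. -/
def IsK2 (G : SimpleGraph V) : Prop := Nonempty (G ≃g (⊤ : SimpleGraph (Fin 2)))

lemma alpha_bdd [Fintype V] (G : SimpleGraph V) :
    BddAbove {n | ∃ s : Finset V, (∀ x ∈ s, ∀ y ∈ s, ¬ G.Adj x y) ∧ s.card = n} :=
  ⟨Fintype.card V, fun n ⟨s, _, hs⟩ => hs ▸ Finset.card_le_univ s⟩

lemma card_le_alpha [Fintype V] {G : SimpleGraph V} {s : Finset V}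
    (h : ∀ x ∈ s, ∀ y ∈ s, ¬ G.Adj x y) : s.card ≤ alpha G :=
  le_csSup (alpha_bdd G) ⟨s, h, rfl⟩

lemma exists_alpha_set [Fintype V] (G : SimpleGraph V) :
    ∃ s : Finset V, (∀ x ∈ s, ∀ y ∈ s, ¬ G.Adj x y) ∧ s.card = alpha G :=
  Nat.sSup_mem (s := {n | ∃ s : Finset V, (∀ x ∈ s, ∀ y ∈ s, ¬ G.Adj x y) ∧ s.card = n})
    ⟨0, ∅, by simp, rfl⟩ (alpha_bdd G)

lemma cross_edge {G : SimpleGraph V} {T : Set V} :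
    ∀ {a b : V}, G.Walk a b → a ∈ T → b ∉ T →
      ∃ x y, x ∈ T ∧ y ∉ T ∧ G.Adj x y := by
  intro a b p
  induction p with
  | nil => intro ha hb; exact absurd ha hb
  | @cons a c b h q ih =>
    intro ha hb
    by_cases hc : c ∈ T
    · exact ih hc hb
    · exact ⟨a, c, ha, hc, h⟩

lemma key_contra [Fintype V] {G : SimpleGraph V} (hG : AlphaCritical G)
    {u v w x : V} (hN : G.neighborSet u = {v, w}) (hvw : G.Adj v w)
    (hx : G.Adj v x) (hxu : x ≠ u) (hxw : x ≠ w) : False := by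
  classical
  have hcrit := hG v x hx
  obtain ⟨P, hPind, hPcard⟩ := exists_alpha_set (G.deleteEdges {s(v, x)})
  have hvx : v ≠ x := G.ne_of_adj hx
  -- adjacency in the deleted graph
  have hdel : ∀ a b : V, (G.deleteEdges {s(v, x)}).Adj a b ↔
      G.Adj a b ∧ ¬ (s(a, b) = s(v, x)) := by
    intro a b
    simp [SimpleGraph.deleteEdges_adj]
  -- P must contain v and x
  have hmem : v ∈ P ∧ x ∈ P := by
    by_contra hcon
    have hPG : ∀ a ∈ P, ∀ b ∈ P, ¬ G.Adj a b := by
      intro a ha b hb hab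
      have hnd := hPind a ha b hb
      rw [hdel] at hnd
      have heq : s(a, b) = s(v, x) := by tauto
      rw [Sym2.eq_iff] at heq
      rcases heq with ⟨rfl, rfl⟩ | ⟨rfl, rfl⟩
      · exact hcon ⟨ha, hb⟩
      · exact hcon ⟨hb, ha⟩
    have := card_le_alpha hPG
    omega
  obtain ⟨hvP, hxP⟩ := hmem
  have huv : G.Adj u v := by
    have : v ∈ G.neighborSet u := by rw [hN]; left; rfl
    exact this
  have huw : G.Adj u w := by
    have : w ∈ G.neighborSet u := by rw [hN]; right; rfl
    exact this
  -- w ∉ P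
  have hwP : w ∉ P := by
    intro hwP
    apply hPind v hvP w hwP
    rw [hdel]
    refine ⟨hvw, ?_⟩
    rw [Sym2.eq_iff]
    rintro (⟨-, rfl⟩ | ⟨rfl, -⟩)
    · exact hxw rfl
    · exact hvx rfl
  -- u ∉ P
  have huP : u ∉ P := by
    intro huP
    apply hPind u huP v hvP
    rw [hdel]
    refine ⟨huv, ?_⟩
    rw [Sym2.eq_iff]
    rintro (⟨h1, h2⟩ | ⟨h1, h2⟩)
    · exact G.ne_of_adj huv h1
    · exact hxu h1.symm
  -- the new independent set
  set Q : Finset V := insert u (P.erase v) with hQ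
  have hQcard : Q.card = P.card := by
    rw [hQ, Finset.card_insert_of_notMem (fun h => huP (Finset.mem_of_mem_erase h)),
      Finset.card_erase_of_mem hvP]
    have : 0 < P.card := Finset.card_pos.2 ⟨v, hvP⟩
    omega
  have hQmem : ∀ a ∈ Q, a = u ∨ (a ∈ P ∧ a ≠ v) := by
    intro a ha
    rw [hQ, Finset.mem_insert] at ha
    rcases ha with rfl | ha
    · exact Or.inl rfl
    · exact Or.inr ⟨Finset.mem_of_mem_erase ha, Finset.ne_of_mem_erase ha⟩
  have hQind : ∀ a ∈ Q, ∀ b ∈ Q, ¬ G.Adj a b := by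
    intro a ha b hb hab
    rcases hQmem a ha with hau | ⟨haP, hav⟩
    · rcases hQmem b hb with hbu | ⟨hbP, hbv⟩
      · rw [hau, hbu] at hab; exact G.ne_of_adj hab rfl
      · rw [hau] at hab
        have hb' : b ∈ G.neighborSet u := hab
        rw [hN] at hb'
        rcases hb' with rfl | rfl
        · exact hbv rfl
        · exact hwP hbP
    · rcases hQmem b hb with hbu | ⟨hbP, hbv⟩
      · rw [hbu] at hab
        have ha' : a ∈ G.neighborSet u := hab.symm
        rw [hN] at ha'
        rcases ha' with rfl | rfl
        · exact hav rfl
        · exact hwP haP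
      · have hnd := hPind a haP b hbP
        rw [hdel] at hnd
        have heq : s(a, b) = s(v, x) := by tauto
        rw [Sym2.eq_iff] at heq
        rcases heq with ⟨h1, h2⟩ | ⟨h1, h2⟩
        · exact hav h1
        · exact hbv h2
  have := card_le_alpha hQind
  omega

theorem stmt_2 {V : Type*} [Fintype V] (G : SimpleGraph V) (hconn : G.Connected)
    (hG : AlphaCritical G) (hcard : 4 ≤ Fintype.card V) (u v w : V) (hvw : v ≠ w)
    (hN : G.neighborSet u = {v, w}) : ¬ G.Adj v w := by
  classical
  intro hadj
  -- there is a vertex outside {u, v, w}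
  obtain ⟨y, hy⟩ : ∃ y : V, y ∉ ({u, v, w} : Finset V) := by
    by_contra hcon
    push_neg at hcon
    have hsub : (Finset.univ : Finset V) ⊆ {u, v, w} := fun z _ => hcon z
    have h1 : ({u, v, w} : Finset V).card ≤ 3 := by
      apply le_trans (Finset.card_insert_le _ _)
      have := Finset.card_insert_le v ({w} : Finset V)
      simp at this ⊢
      omega
    have := Finset.card_le_card hsub
    rw [Finset.card_univ] at this
    omega
  obtain ⟨p⟩ := hconn.preconnected u y
  have hyT : y ∉ ({u, v, w} : Set V) := by
    simpa using hy
  obtain ⟨a, b, haT, hbT, hab⟩ := cross_edge (T := ({u, v, w} : Set V)) p (by simp) hyT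
  have hbu : b ≠ u := fun h => hbT (by simp [h])
  have hbv : b ≠ v := fun h => hbT (by simp [h])
  have hbw : b ≠ w := fun h => hbT (by simp [h])
  rcases haT with rfl | rfl | rfl
  · -- a = u : then b is a neighbor of u, so b ∈ {v, w}, contradiction
    have : b ∈ G.neighborSet a := hab
    rw [hN] at this
    rcases this with rfl | rfl
    · exact hbv rfl
    · exact hbw rfl
  · exact key_contra hG hN hadj hab hbu hbw
  · have hN' : G.neighborSet u = {a, v} := by rw [hN, Set.pair_comm]
    exact key_contra hG hN' hadj.symm hab hbu hbv
end

section
/- Let G be an α-critical graph and u a vertex of G. Then α(G − u) = α(G). -/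
open SimpleGraph

variable {V : Type*}

lemma alpha_bddAbove (G : SimpleGraph V) [Fintype V] :
    BddAbove {n | ∃ s : Finset V, (∀ x ∈ s, ∀ y ∈ s, ¬ G.Adj x y) ∧ s.card = n} := by
  refine ⟨Fintype.card V, fun n hn => ?_⟩
  obtain ⟨s, -, rfl⟩ := hn
  simpa using Finset.card_le_univ s

lemma le_alpha (G : SimpleGraph V) [Fintype V] (s : Finset V)
    (h : ∀ x ∈ s, ∀ y ∈ s, ¬ G.Adj x y) : s.card ≤ alpha G :=
  le_csSup (alpha_bddAbove G) ⟨s, h, rfl⟩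

lemma exists_alpha (G : SimpleGraph V) [Fintype V] :
    ∃ s : Finset V, (∀ x ∈ s, ∀ y ∈ s, ¬ G.Adj x y) ∧ s.card = alpha G :=
  Nat.sSup_mem (s := {n | ∃ s : Finset V, (∀ x ∈ s, ∀ y ∈ s, ¬ G.Adj x y) ∧ s.card = n}) ⟨0, ∅, by simp, rfl⟩ (alpha_bddAbove G)

theorem stmt_11 {V : Type*} [Fintype V] (G : SimpleGraph V) (hG : AlphaCritical G)
    (u : V) (hu : ∃ w, G.Adj u w) :
    alpha (G.induce {v | v ≠ u}) = alpha G := by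
  classical
  obtain ⟨w, hw⟩ := hu
  apply le_antisymm
  · -- any independent set in the induced graph gives one in G
    obtain ⟨s, hs, hcard⟩ := exists_alpha (G.induce {v | v ≠ u})
    rw [← hcard]
    have := le_alpha G (s.map ⟨Subtype.val, Subtype.val_injective⟩) ?_
    · simpa using this
    · intro x hx y hy hadj
      simp only [Finset.mem_map, Function.Embedding.coeFn_mk] at hx hy
      obtain ⟨a, ha, rfl⟩ := hx
      obtain ⟨b, hb, rfl⟩ := hy
      exact hs a ha b hb hadj
  · -- use criticality on edge uw
    have hlt := hG u w hw
    obtain ⟨s, hs, hcard⟩ := exists_alpha (G.deleteEdges {s(u, w)})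
    have hindep : ∀ x ∈ s.erase u, ∀ y ∈ s.erase u, ¬ G.Adj x y := by
      intro x hx y hy hadj
      have hxu := Finset.ne_of_mem_erase hx
      have hyu := Finset.ne_of_mem_erase hy
      have hxs := Finset.mem_of_mem_erase hx
      have hys := Finset.mem_of_mem_erase hy
      have := hs x hxs y hys
      simp only [SimpleGraph.deleteEdges_adj, Set.mem_singleton_iff] at this
      have hne : s(x, y) = s(u, w) := by tauto
      rw [Sym2.eq_iff] at hne
      rcases hne with ⟨rfl, rfl⟩ | ⟨rfl, rfl⟩
      · exact hxu rfl
      · exact hyu rfl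
    have hmem : ∀ x ∈ s.erase u, x ∈ {v | v ≠ u} := fun x hx =>
      Finset.ne_of_mem_erase hx
    set t : Finset {v | v ≠ u} := (s.erase u).attach.image
      (fun x => ⟨x.1, hmem x.1 x.2⟩) with ht
    have htcard : t.card = (s.erase u).card := by
      rw [ht]
      rw [Finset.card_image_of_injective _ (fun a b hab => Subtype.ext (by
        simpa using congrArg Subtype.val hab))]
      exact Finset.card_attach
    have htindep : ∀ x ∈ t, ∀ y ∈ t, ¬ (G.induce {v | v ≠ u}).Adj x y := by
      intro x hx y hy hadj
      rw [ht] at hx hy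
      simp only [Finset.mem_image, Finset.mem_attach, true_and, Subtype.exists] at hx hy
      obtain ⟨a, ha, rfl⟩ := hx
      obtain ⟨b, hb, rfl⟩ := hy
      exact hindep a ha b hb hadj
    have h1 : t.card ≤ alpha (G.induce {v | v ≠ u}) := le_alpha _ t htindep
    have h2 : alpha G ≤ (s.erase u).card := by
      have : alpha G + 1 ≤ s.card := by omega
      have := Finset.pred_card_le_card_erase (s := s) (a := u)
      omega
    omega
end
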